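/- Let 0 < R_ON < R_OFF, R > 0, and 0 ≤ Y ≤ X ≤ 1. Then the limiting output voltage Z'∞ = (X·R_ON + Y·R_OFF)/(R_ON + R_OFF + R_ON·R_OFF/R) of the memristor min-circuit satisfies |Z'∞ − Y| ≤ R_ON/R_OFF + R_ON/R; in particular Z'∞ ≈ min(X,Y) when R_OFF/R_ON and R/R_ON are large. -/

import Mathlib

/-- The limiting output voltage of the memristor min-circuit is
within R_ON/R_OFF + R_ON/R of Y = min(X,Y). -/
theorem memristor_min_circuit_limit_close_to_min
    (RON ROFF R X Y : ℝ) (hON : 0 < RON) (hONOFF : RON < ROFF) (hR : 0 < R)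
    (hY : 0 ≤ Y) (hYX : Y ≤ X) (hX : X ≤ 1) :
    |(X * RON + Y * ROFF) / (RON + ROFF + RON * ROFF / R) - Y| ≤
      RON / ROFF + RON / R := by
  have hOFF : 0 < ROFF := hON.trans hONOFF
  have hD : 0 < RON + ROFF + RON * ROFF / R := by positivity
  have hY1 : Y ≤ 1 := hYX.trans hX
  set a := RON / ROFF with ha_def
  set b := RON / R with hb_def
  have ha : a * ROFF = RON := div_mul_cancel₀ _ hOFF.ne'
  have hb : b * R = RON := div_mul_cancel₀ _ hR.ne'
  have hc : RON * ROFF / R = b * ROFF := by rw [hb_def]; ring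
  have ha0 : 0 ≤ a := by positivity
  have hb0 : 0 ≤ b := by positivity
  rw [abs_le]
  constructor
  · rw [div_sub' hD.ne', neg_le, ← neg_div, div_le_iff₀ hD, hc]
    nlinarith [mul_nonneg hb0 (add_pos hON (by positivity : (0:ℝ) < b * ROFF)).le,
      mul_nonneg ha0 hD.le, mul_nonneg (mul_nonneg hb0 hOFF.le) (sub_nonneg.2 hY1),
      mul_nonneg hON.le (sub_nonneg.2 hYX)]
  · rw [div_sub' hD.ne', div_le_iff₀ hD, hc]
    nlinarith [mul_nonneg ha0 (add_pos hON (by positivity : (0:ℝ) < b * ROFF)).le,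
      mul_nonneg hb0 hD.le, mul_nonneg (mul_nonneg hb0 hOFF.le) hY,
      mul_nonneg hON.le (sub_nonneg.2 (hX.trans_eq rfl)),
      mul_nonneg hON.le (sub_nonneg.2 hYX), mul_nonneg hON.le (sub_nonneg.2 hX)]
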